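/- For an odd prime p and integers α, β with 0 ≤ α, β ≤ p-1 and α + β ≥ p, the sum ∑_{k=0}^{p-1} (-1)^k C(α,k) C(β,k) C(-1-α-β,k) is congruent to 0 modulo p^2. -/

import Mathlib

/-- Generalized binomial coefficient `C(x,k) = x(x-1)⋯(x-k+1)/k!` for rational `x`. -/
def gbinom (x : ℚ) (k : ℕ) : ℚ := (∏ i ∈ Finset.range k, (x - i)) / (Nat.factorial k)

open Finset

lemma prod_cast_desc (n k : ℕ) : (∏ i ∈ range k, ((n : ℚ) - i)) = (n.descFactorial k : ℚ) := by
  induction k with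
  | zero => simp
  | succ k ih =>
    rw [Finset.prod_range_succ, ih, Nat.descFactorial_succ]
    rcases le_or_gt k n with h | h
    · push_cast [h]; ring
    · rw [Nat.descFactorial_of_lt h]; simp

lemma gbinom_nat (n k : ℕ) : gbinom (n : ℚ) k = (n.choose k : ℚ) := by
  unfold gbinom
  rw [prod_cast_desc, Nat.descFactorial_eq_factorial_mul_choose]
  have hf : (k.factorial : ℚ) ≠ 0 := by exact_mod_cast Nat.factorial_ne_zero k
  push_cast
  field_simp

lemma prod_cast_neg (n k : ℕ) :
    (∏ i ∈ range k, ((-1 - (n : ℚ)) - i)) = (-1 : ℚ)^k * ((n + k).descFactorial k : ℚ) := by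
  induction k with
  | zero => simp
  | succ k ih =>
    rw [Finset.prod_range_succ, ih]
    have h : (n + (k + 1)).descFactorial (k + 1) = (n + k + 1) * (n + k).descFactorial k := by
      rw [show n + (k + 1) = (n + k) + 1 from rfl]
      exact Nat.succ_descFactorial_succ (n + k) k
    rw [h]
    push_cast
    ring

lemma gbinom_neg (n k : ℕ) :
    gbinom (-1 - (n : ℚ)) k = (-1 : ℚ)^k * ((n + k).choose k : ℚ) := by
  unfold gbinom
  rw [prod_cast_neg, Nat.descFactorial_eq_factorial_mul_choose]
  have hf : (k.factorial : ℚ) ≠ 0 := by exact_mod_cast Nat.factorial_ne_zero k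
  push_cast
  field_simp

/-- Vandermonde in range form. -/
lemma vand' (a c m : ℕ) :
    ∑ t ∈ range (m + 1), a.choose t * c.choose (m - t) = (a + c).choose m := by
  rw [Nat.add_choose_eq, Finset.Nat.sum_antidiagonal_eq_sum_range_succ_mk]

lemma vand1 (a b : ℕ) :
    ∑ i ∈ range (a + 1), a.choose i * b.choose i = (a + b).choose a := by
  have h : ∑ i ∈ range (a + 1), a.choose i * b.choose i
      = ∑ i ∈ range (a + 1), b.choose i * a.choose (a - i) := by
    refine Finset.sum_congr rfl fun i hi => ?_
    rw [Nat.choose_symm (Nat.lt_succ_iff.1 (mem_range.1 hi)), Nat.mul_comm]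
  rw [h, vand' b a a, Nat.add_comm b a]

lemma inner_le (a b i : ℕ) (hia : i ≤ a) :
    ∑ k ∈ range (a + 1), a.choose k * b.choose k * k.choose i
      = b.choose i * ((a + b - i).choose (a - i)) := by
  by_cases hib : i ≤ b
  · have hsplit : a + 1 = i + (a - i + 1) := by omega
    rw [hsplit, Finset.sum_range_add]
    have h0 : ∑ k ∈ range i, a.choose k * b.choose k * k.choose i = 0 := by
      refine Finset.sum_eq_zero fun k hk => ?_
      rw [Nat.choose_eq_zero_of_lt (mem_range.1 hk), Nat.mul_zero]
    rw [h0, zero_add]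
    have h1 : ∀ t ∈ range (a - i + 1),
        a.choose (i + t) * b.choose (i + t) * (i + t).choose i
          = b.choose i * ((b - i).choose t * a.choose ((a - i) - t)) := by
      intro t ht
      have ht' : t ≤ a - i := Nat.lt_succ_iff.1 (mem_range.1 ht)
      have hita : i + t ≤ a := by omega
      have hcm : b.choose (i + t) * (i + t).choose i
          = b.choose i * (b - i).choose t := by
        by_cases h : i + t ≤ b
        · have := Nat.choose_mul (n := b) (Nat.le_add_right i t)
          simpa [Nat.add_sub_cancel_left] using this
        · rw [Nat.choose_eq_zero_of_lt (by omega : b < i + t),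
            Nat.choose_eq_zero_of_lt (by omega : b - i < t)]
          ring
      have hsymm : a.choose (i + t) = a.choose ((a - i) - t) := by
        rw [show (a - i) - t = a - (i + t) by omega, Nat.choose_symm hita]
      calc a.choose (i + t) * b.choose (i + t) * (i + t).choose i
          = (b.choose (i + t) * (i + t).choose i) * a.choose (i + t) := by ring
        _ = b.choose i * (b - i).choose t * a.choose ((a - i) - t) := by
            rw [hcm, hsymm]
        _ = b.choose i * ((b - i).choose t * a.choose ((a - i) - t)) := by ring
    rw [Finset.sum_congr rfl h1, ← Finset.mul_sum, vand' (b - i) a (a - i)]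
    congr 2
    omega
  · rw [Nat.choose_eq_zero_of_lt (by omega : b < i), Nat.zero_mul]
    refine Finset.sum_eq_zero fun k hk => ?_
    rcases le_or_gt i k with h | h
    · rw [Nat.choose_eq_zero_of_lt (by omega : b < k)]; ring
    · rw [Nat.choose_eq_zero_of_lt h, Nat.mul_zero]

lemma key_identity (a b : ℕ) :
    ∑ k ∈ range (a + 1), a.choose k * b.choose k * (a + b + k).choose k
      = ((a + b).choose a)^2 := by
  have hvk : ∀ k, (a + b + k).choose k
      = ∑ i ∈ range (a + b + 1), k.choose i * (a + b).choose (a + b - i) := by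
    intro k
    rw [Nat.add_comm (a + b) k, Nat.choose_symm_add, Nat.add_choose_eq,
      Finset.Nat.sum_antidiagonal_eq_sum_range_succ_mk]
  calc ∑ k ∈ range (a + 1), a.choose k * b.choose k * (a + b + k).choose k
      = ∑ k ∈ range (a + 1), ∑ i ∈ range (a + b + 1),
          a.choose k * b.choose k * k.choose i * (a + b).choose (a + b - i) := by
        refine Finset.sum_congr rfl fun k _ => ?_
        rw [hvk k, Finset.mul_sum]
        refine Finset.sum_congr rfl fun i _ => by ring
    _ = ∑ i ∈ range (a + b + 1), ∑ k ∈ range (a + 1),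
          a.choose k * b.choose k * k.choose i * (a + b).choose (a + b - i) :=
        Finset.sum_comm
    _ = ∑ i ∈ range (a + b + 1),
          (∑ k ∈ range (a + 1), a.choose k * b.choose k * k.choose i)
            * (a + b).choose (a + b - i) := by
        refine Finset.sum_congr rfl fun i _ => ?_
        rw [Finset.sum_mul]
    _ = ∑ i ∈ range (a + 1),
          (∑ k ∈ range (a + 1), a.choose k * b.choose k * k.choose i)
            * (a + b).choose (a + b - i) := by
        refine (Finset.sum_subset (Finset.range_subset_range.2 (by omega)) ?_).symm
        intro i hi hni
        have hai : a < i := by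
          simp only [mem_range] at hni
          omega
        have hz : (∑ k ∈ range (a + 1), a.choose k * b.choose k * k.choose i) = 0 := by
          refine Finset.sum_eq_zero fun k hk => ?_
          have : k < i := by
            have := mem_range.1 hk
            omega
          rw [Nat.choose_eq_zero_of_lt this, Nat.mul_zero]
        rw [hz, Nat.zero_mul]
    _ = ∑ i ∈ range (a + 1), (a + b).choose a * (a.choose i * b.choose i) := by
        refine Finset.sum_congr rfl fun i hi => ?_
        have hia : i ≤ a := Nat.lt_succ_iff.1 (mem_range.1 hi)
        rw [inner_le a b i hia]
        have hsym : (a + b).choose (a + b - i) = (a + b).choose i :=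
          Nat.choose_symm (by omega)
        have hcm := Nat.choose_mul (n := a + b) hia
        calc b.choose i * (a + b - i).choose (a - i) * (a + b).choose (a + b - i)
            = (a + b).choose i * (a + b - i).choose (a - i) * b.choose i := by
              rw [hsym]; ring
          _ = (a + b).choose a * a.choose i * b.choose i := by rw [← hcm]
          _ = (a + b).choose a * (a.choose i * b.choose i) := by ring
    _ = (a + b).choose a * ∑ i ∈ range (a + 1), a.choose i * b.choose i := by
        rw [Finset.mul_sum]
    _ = ((a + b).choose a)^2 := by rw [vand1, sq]

/-- For an odd prime `p` and integers `0 ≤ α, β ≤ p-1` with `α + β ≥ p`,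
`∑_{k=0}^{p-1} (-1)^k C(α,k) C(β,k) C(-1-α-β,k) ≡ 0 (mod p²)`. -/
theorem alt_triple_binom_sum_div (p : ℕ) (hp : p.Prime) (hodd : Odd p)
    (α β : ℕ) (hα : α ≤ p - 1) (hβ : β ≤ p - 1) (hab : p ≤ α + β) :
    ∃ m : ℤ, ∑ k ∈ Finset.range p,
        (-1 : ℚ)^k * gbinom (α : ℚ) k * gbinom (β : ℚ) k * gbinom (-1 - α - β) k
      = (p : ℚ)^2 * m := by
  have h2 := hp.two_le
  have hα' : α < p := by omega
  have hβ' : β < p := by omega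
  have hkeyp : ∑ k ∈ range p, α.choose k * β.choose k * (α + β + k).choose k
      = ((α + β).choose α)^2 := by
    rw [← key_identity α β]
    refine (Finset.sum_subset (Finset.range_subset_range.2 (by omega)) ?_).symm
    intro k _ hk
    have : α < k := by
      simp only [mem_range] at hk
      omega
    rw [Nat.choose_eq_zero_of_lt this, Nat.zero_mul, Nat.zero_mul]
  obtain ⟨c, hc⟩ := hp.dvd_choose hα' (show α + β - α < p by omega) hab
  refine ⟨(c : ℤ)^2, ?_⟩
  have hterm : ∀ k ∈ range p,
      (-1 : ℚ)^k * gbinom (α : ℚ) k * gbinom (β : ℚ) k * gbinom (-1 - α - β) k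
        = ((α.choose k * β.choose k * ((α + β + k).choose k) : ℕ) : ℚ) := by
    intro k _
    have hcast : (-1 - (α : ℚ) - (β : ℚ)) = -1 - (((α + β : ℕ) : ℕ) : ℚ) := by
      push_cast; ring
    rw [gbinom_nat, gbinom_nat, hcast, gbinom_neg]
    have h4 : ((-1 : ℚ))^k * (α.choose k : ℚ) * (β.choose k : ℚ)
        * ((-1 : ℚ)^k * ((α + β + k).choose k : ℚ))
        = (((-1 : ℚ)) * (-1))^k
          * ((α.choose k : ℚ) * (β.choose k : ℚ) * ((α + β + k).choose k : ℚ)) := by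
      rw [mul_pow]; ring
    rw [h4]
    norm_num
  rw [Finset.sum_congr rfl hterm, ← Nat.cast_sum, hkeyp, hc]
  push_cast
  ring
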